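/- Let p be a probability distribution on a finite set {x_1, ..., x_K} with p(x_k) > 0 for every k. Define the Miller–Madow estimator Ĥ_mm(D_N) = Ĥ_mle(D_N) + (K − 1)/(2N), where D_N consists of N i.i.d. samples from p. Then the bias of the Miller–Madow estimator is o(1/N): N · (E[Ĥ_mm(D_N)] − H(p)) → 0 as N → ∞. -/

import Mathlib

open Finset Real Filter

/-- Shannon entropy of a finite distribution (convention `0 * log 0 = 0`). -/
noncomputable def entropy {K : ℕ} (p : Fin K → ℝ) : ℝ := -∑ k, p k * Real.log (p k)

/-- The empirical (maximum-likelihood) distribution of a dataset of `N` samples. -/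
noncomputable def empirical {N K : ℕ} (D : Fin N → Fin K) (k : Fin K) : ℝ :=
  ((Finset.univ.filter (fun n => D n = k)).card : ℝ) / N

/-- Expectation of a statistic over `N` i.i.d. samples from `p`. -/
noncomputable def expect {N K : ℕ} (p : Fin K → ℝ) (f : (Fin N → Fin K) → ℝ) : ℝ :=
  ∑ D : Fin N → Fin K, (∏ n, p (D n)) * f D

/-- Binomial expectation: `E[f(C)]` for `C ~ Bin(n, p)`. -/
noncomputable def binExp (p : ℝ) (n : ℕ) (f : ℕ → ℝ) : ℝ :=
  ∑ c ∈ Finset.range (n+1), (n.choose c : ℝ) * p^c * (1-p)^(n-c) * f c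

lemma binExp_congr {p : ℝ} {n : ℕ} {f g : ℕ → ℝ} (h : ∀ c ≤ n, f c = g c) :
    binExp p n f = binExp p n g := by
  unfold binExp
  refine Finset.sum_congr rfl fun c hc => ?_
  rw [h c (by simpa [Nat.lt_succ_iff] using hc)]

lemma binExp_add (p : ℝ) (n : ℕ) (f g : ℕ → ℝ) :
    binExp p n (fun c => f c + g c) = binExp p n f + binExp p n g := by
  simp [binExp, mul_add, Finset.sum_add_distrib]

lemma binExp_smul (p : ℝ) (n : ℕ) (a : ℝ) (f : ℕ → ℝ) :
    binExp p n (fun c => a * f c) = a * binExp p n f := by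
  simp only [binExp, Finset.mul_sum]
  exact Finset.sum_congr rfl fun c _ => by ring

lemma binExp_one (p : ℝ) (n : ℕ) : binExp p n (fun _ => 1) = 1 := by
  have := add_pow p (1-p) n
  have h2 : (p + (1-p))^n = 1 := by norm_num
  rw [h2] at this
  rw [binExp]
  simp only [mul_one]
  have h3 : ∑ x ∈ Finset.range (n+1), (n.choose x:ℝ) * p^x*(1-p)^(n-x)
      = ∑ m ∈ Finset.range (n+1), p^m*(1-p)^(n-m)*(n.choose m:ℝ) :=
    Finset.sum_congr rfl fun c _ => by ring
  rw [h3, ← this]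

lemma binExp_absorb (p : ℝ) (n : ℕ) (f : ℕ → ℝ) :
    binExp p (n+1) (fun c => (c:ℝ) * f c) = ((n:ℝ)+1) * p * binExp p n (fun c => f (c+1)) := by
  rw [binExp, Finset.sum_range_succ']
  simp only [Nat.cast_zero, zero_mul, mul_zero, add_zero, Nat.succ_sub_succ]
  rw [binExp, Finset.mul_sum]
  refine Finset.sum_congr rfl fun c _ => ?_
  have h' : ((n:ℝ)+1) * (n.choose c:ℝ) = ((n+1).choose (c+1):ℝ) * ((c:ℝ)+1) := by
    exact_mod_cast congrArg (Nat.cast (R := ℝ)) (Nat.add_one_mul_choose_eq n c)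
  push_cast
  linear_combination (-(p^(c+1) * (1-p)^(n-c) * f (c+1))) * h'

lemma binExp_succ (p : ℝ) (n : ℕ) (f : ℕ → ℝ) :
    binExp p (n+1) f = p * binExp p n (fun c => f (c+1)) + (1-p) * binExp p n f := by
  have key : ∀ c ∈ Finset.range (n+1), (1-p) * ((n.choose c : ℝ) * p^c * (1-p)^(n-c) * f c)
      = (n.choose c : ℝ) * p^c * (1-p)^(n+1-c) * f c := by
    intro c hc
    rw [Nat.succ_sub (by simpa [Nat.lt_succ_iff] using hc), pow_succ]
    ring
  have hT : ∑ c ∈ Finset.range (n+2), (n.choose c : ℝ) * p^c * (1-p)^(n+1-c) * f c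
      = (1-p) * binExp p n f := by
    rw [Finset.sum_range_succ, Nat.choose_succ_self]
    simp only [Nat.cast_zero, zero_mul, add_zero]
    rw [binExp, Finset.mul_sum]
    exact (Finset.sum_congr rfl key).symm
  rw [Finset.sum_range_succ'] at hT
  rw [binExp, Finset.sum_range_succ']
  simp only [Nat.choose_zero_right, Nat.cast_one, one_mul, pow_zero, Nat.succ_sub_succ,
    Nat.sub_zero, Nat.choose_succ_succ, Nat.cast_add] at hT ⊢
  rw [← hT, binExp, Finset.mul_sum]
  simp only [Nat.succ_eq_add_one]
  have hsplit : ∑ x ∈ Finset.range (n+1), ((n.choose x:ℝ) + (n.choose (x+1):ℝ)) * p^(x+1) * (1-p)^(n-x) * f (x+1)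
      = (∑ i ∈ Finset.range (n+1), p * ((n.choose i:ℝ) * p^i * (1-p)^(n-i) * f (i+1)))
        + ∑ x ∈ Finset.range (n+1), (n.choose (x+1):ℝ) * p^(x+1) * (1-p)^(n-x) * f (x+1) := by
    rw [← Finset.sum_add_distrib]
    exact Finset.sum_congr rfl fun c _ => by ring
  linarith [hsplit]

lemma binExp_zero (p : ℝ) (f : ℕ → ℝ) : binExp p 0 f = f 0 := by
  simp [binExp]

lemma binExp_poly (p : ℝ) (n : ℕ) (a0 a1 a2 a3 a4 : ℝ) :
    binExp p n (fun c => a4*(c:ℝ)^4 + (a3*(c:ℝ)^3 + (a2*(c:ℝ)^2 + (a1*(c:ℝ) + a0*1)))) =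
      a4 * binExp p n (fun c => (c:ℝ)^4) + (a3 * binExp p n (fun c => (c:ℝ)^3) +
      (a2 * binExp p n (fun c => (c:ℝ)^2) + (a1 * binExp p n (fun c => (c:ℝ)) +
       a0 * binExp p n (fun _ => 1)))) := by
  rw [binExp_add, binExp_add, binExp_add, binExp_add, binExp_smul, binExp_smul, binExp_smul,
    binExp_smul, binExp_smul]

lemma binExp_m1 (p : ℝ) (n : ℕ) : binExp p n (fun c => (c:ℝ)) = (n:ℝ) * p := by
  cases n with
  | zero => simp [binExp_zero]
  | succ m =>
    have h := binExp_absorb p m (fun _ => 1)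
    simp only [mul_one] at h
    rw [h, binExp_one]
    push_cast; ring

lemma binExp_m2 (p : ℝ) (n : ℕ) :
    binExp p n (fun c => (c:ℝ)^2) = (n:ℝ)*p*(((n:ℝ)-1)*p+1) := by
  cases n with
  | zero => simp [binExp_zero]
  | succ m =>
    have h := binExp_absorb p m (fun c => (c:ℝ))
    have e1 : binExp p (m+1) (fun c => (c:ℝ)^2) = binExp p (m+1) (fun c => (c:ℝ) * (c:ℝ)) :=
      binExp_congr fun c _ => by ring
    have e2 : binExp p m (fun c => ((c+1:ℕ):ℝ)) = binExp p m (fun c => (c:ℝ) + 1) :=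
      binExp_congr fun c _ => by push_cast; ring
    rw [e1, h, e2, binExp_add, binExp_m1, binExp_one]
    push_cast; ring

lemma binExp_m3 (p : ℝ) (n : ℕ) :
    binExp p n (fun c => (c:ℝ)^3) =
      (n:ℝ)*((n:ℝ)-1)*((n:ℝ)-2)*p^3 + 3*(n:ℝ)*((n:ℝ)-1)*p^2 + (n:ℝ)*p := by
  cases n with
  | zero => simp [binExp_zero]
  | succ m =>
    have h := binExp_absorb p m (fun c => (c:ℝ)^2)
    have e1 : binExp p (m+1) (fun c => (c:ℝ)^3) = binExp p (m+1) (fun c => (c:ℝ) * (c:ℝ)^2) :=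
      binExp_congr fun c _ => by ring
    have e2 : binExp p m (fun c => ((c+1:ℕ):ℝ)^2)
        = binExp p m (fun c => (c:ℝ)^2 + (2*(c:ℝ) + 1*1)) :=
      binExp_congr fun c _ => by push_cast; ring
    have e3 : binExp p m (fun c => (c:ℝ)^2 + (2*(c:ℝ) + 1*1))
        = binExp p m (fun c => (c:ℝ)^2) + (2 * binExp p m (fun c => (c:ℝ)) + 1 * binExp p m (fun _ => 1)) := by
      rw [binExp_add, binExp_add, binExp_smul, binExp_smul]
    rw [e1, h, e2, e3, binExp_m1, binExp_m2, binExp_one]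
    push_cast; ring

lemma binExp_m4 (p : ℝ) (n : ℕ) :
    binExp p n (fun c => (c:ℝ)^4) =
      (n:ℝ)*((n:ℝ)-1)*((n:ℝ)-2)*((n:ℝ)-3)*p^4 + 6*(n:ℝ)*((n:ℝ)-1)*((n:ℝ)-2)*p^3
        + 7*(n:ℝ)*((n:ℝ)-1)*p^2 + (n:ℝ)*p := by
  cases n with
  | zero => simp [binExp_zero]
  | succ m =>
    have h := binExp_absorb p m (fun c => (c:ℝ)^3)
    have e1 : binExp p (m+1) (fun c => (c:ℝ)^4) = binExp p (m+1) (fun c => (c:ℝ) * (c:ℝ)^3) :=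
      binExp_congr fun c _ => by ring
    have e2 : binExp p m (fun c => ((c+1:ℕ):ℝ)^3)
        = binExp p m (fun c => (c:ℝ)^3 + (3*(c:ℝ)^2 + (3*(c:ℝ) + 1*1))) :=
      binExp_congr fun c _ => by push_cast; ring
    have e3 : binExp p m (fun c => (c:ℝ)^3 + (3*(c:ℝ)^2 + (3*(c:ℝ) + 1*1)))
        = binExp p m (fun c => (c:ℝ)^3) + (3 * binExp p m (fun c => (c:ℝ)^2)
          + (3 * binExp p m (fun c => (c:ℝ)) + 1 * binExp p m (fun _ => 1))) := by
      rw [binExp_add, binExp_add, binExp_add, binExp_smul, binExp_smul, binExp_smul]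
    rw [e1, h, e2, e3, binExp_m1, binExp_m2, binExp_m3, binExp_one]
    push_cast; ring

lemma binExp_E1 (p : ℝ) (n : ℕ) :
    binExp p n (fun c => (c:ℝ)+1-((n:ℝ)+1)*p) = 1 - p := by
  have e : binExp p n (fun c => (c:ℝ)+1-((n:ℝ)+1)*p)
      = binExp p n (fun c => 0*(c:ℝ)^4 + (0*(c:ℝ)^3 + (0*(c:ℝ)^2 + (1*(c:ℝ) + (1-((n:ℝ)+1)*p)*1)))) :=
    binExp_congr fun c _ => by ring
  rw [e, binExp_poly, binExp_m1, binExp_one]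
  ring

lemma binExp_E2 (p : ℝ) (n : ℕ) :
    binExp p n (fun c => ((c:ℝ)+1-((n:ℝ)+1)*p)^2) = (n:ℝ)*p*(1-p) + (1-p)^2 := by
  have e : binExp p n (fun c => ((c:ℝ)+1-((n:ℝ)+1)*p)^2)
      = binExp p n (fun c => 0*(c:ℝ)^4 + (0*(c:ℝ)^3 + (1*(c:ℝ)^2 +
          ((2*(1-((n:ℝ)+1)*p))*(c:ℝ) + ((1-((n:ℝ)+1)*p)^2)*1)))) :=
    binExp_congr fun c _ => by ring
  rw [e, binExp_poly, binExp_m1, binExp_m2, binExp_one]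
  ring

lemma binExp_E3 (p : ℝ) (n : ℕ) :
    binExp p n (fun c => ((c:ℝ)+1-((n:ℝ)+1)*p)^3)
      = (n:ℝ)*p*(1-p)*(4-5*p) + (1-p)^3 := by
  have e : binExp p n (fun c => ((c:ℝ)+1-((n:ℝ)+1)*p)^3)
      = binExp p n (fun c => 0*(c:ℝ)^4 + (1*(c:ℝ)^3 + ((3*(1-((n:ℝ)+1)*p))*(c:ℝ)^2 +
          ((3*(1-((n:ℝ)+1)*p)^2)*(c:ℝ) + ((1-((n:ℝ)+1)*p)^3)*1)))) :=
    binExp_congr fun c _ => by ring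
  rw [e, binExp_poly, binExp_m1, binExp_m2, binExp_m3, binExp_one]
  ring

lemma binExp_E4 (p : ℝ) (n : ℕ) :
    binExp p n (fun c => ((c:ℝ)+1-((n:ℝ)+1)*p)^4)
      = 3*(n:ℝ)^2*p^2*(1-p)^2
        + (n:ℝ)*p*(1-p)*((1-6*p*(1-p)) + 4*(1-p)*((1-p)-p) + 6*(1-p)^2) + (1-p)^4 := by
  have e : binExp p n (fun c => ((c:ℝ)+1-((n:ℝ)+1)*p)^4)
      = binExp p n (fun c => 1*(c:ℝ)^4 + ((4*(1-((n:ℝ)+1)*p))*(c:ℝ)^3 +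
          ((6*(1-((n:ℝ)+1)*p)^2)*(c:ℝ)^2 +
          ((4*(1-((n:ℝ)+1)*p)^3)*(c:ℝ) + ((1-((n:ℝ)+1)*p)^4)*1)))) :=
    binExp_congr fun c _ => by ring
  rw [e, binExp_poly, binExp_m1, binExp_m2, binExp_m3, binExp_m4, binExp_one]
  ring

lemma expect_count {K : ℕ} (p : Fin K → ℝ) (hsum : ∑ j, p j = 1) (k : Fin K)
    (N : ℕ) (f : ℕ → ℝ) :
    (∑ D : Fin N → Fin K, (∏ n, p (D n)) * f ((Finset.univ.filter (fun n => D n = k)).card))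
      = binExp (p k) N f := by
  induction N generalizing f with
  | zero =>
    rw [binExp_zero]
    calc (∑ D : Fin 0 → Fin K, (∏ n, p (D n)) * f ((Finset.univ.filter (fun n => D n = k)).card))
        = ∑ _D : Fin 0 → Fin K, f 0 := Finset.sum_congr rfl (fun D _ => by simp)
      _ = f 0 := by simp
  | succ N ih =>
    rw [binExp_succ]
    rw [← Fintype.sum_equiv (Fin.consEquiv (fun _ => Fin K))
      (fun q => (∏ n, p ((Fin.consEquiv (fun _ => Fin K)) q n)) *
        f ((Finset.univ.filter (fun n => (Fin.consEquiv (fun _ => Fin K)) q n = k)).card))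
      _ (fun q => rfl)]
    rw [Fintype.sum_prod_type]
    have hterm : ∀ (j : Fin K) (D : Fin N → Fin K),
        (∏ n, p ((Fin.consEquiv (fun _ => Fin K)) (j, D) n)) = p j * ∏ n, p (D n) := by
      intro j D
      rw [Fin.prod_univ_succ]
      simp [Fin.consEquiv]
    have hcount : ∀ (j : Fin K) (D : Fin N → Fin K),
        ((Finset.univ.filter (fun n => (Fin.consEquiv (fun _ => Fin K)) (j, D) n = k)).card)
          = (if j = k then 1 else 0) + ((Finset.univ.filter (fun n => D n = k)).card) := by
      intro j D
      rw [Finset.card_filter, Finset.card_filter, Fin.sum_univ_succ]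
      simp [Fin.consEquiv]
    have hsplit : ∀ j : Fin K,
        (∑ D : Fin N → Fin K, (∏ n, p ((Fin.consEquiv (fun _ => Fin K)) (j, D) n)) *
          f ((Finset.univ.filter (fun n => (Fin.consEquiv (fun _ => Fin K)) (j, D) n = k)).card))
        = p j * (if j = k then binExp (p k) N (fun c => f (c+1)) else binExp (p k) N f) := by
      intro j
      by_cases hj : j = k
      · subst hj
        rw [if_pos rfl, ← ih (fun c => f (c+1)), Finset.mul_sum]
        refine Finset.sum_congr rfl fun D _ => ?_
        rw [hterm j D, hcount j D, if_pos rfl, Nat.add_comm 1]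
        ring
      · simp only [if_neg hj]
        rw [← ih f, Finset.mul_sum]
        refine Finset.sum_congr rfl fun D _ => ?_
        rw [hterm j D, hcount j D, if_neg hj]
        ring
    rw [Finset.sum_congr rfl (fun j _ => hsplit j)]
    have h1 : (∑ j : Fin K, p j * (if j = k then binExp (p k) N (fun c => f (c+1)) else binExp (p k) N f))
        = ∑ j : Fin K, ((if j = k then p k * binExp (p k) N (fun c => f (c+1))
            - p k * binExp (p k) N f else 0) + p j * binExp (p k) N f) := by
      refine Finset.sum_congr rfl fun j _ => ?_
      by_cases hj : j = k
      · subst hj; simp only [if_true, eq_self_iff_true]; ring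
      · simp only [if_neg hj]; ring
    rw [h1, Finset.sum_add_distrib, Finset.sum_ite_eq' Finset.univ k, ← Finset.sum_mul, hsum]
    simp only [Finset.mem_univ, if_pos]
    ring

lemma log_taylor_bound {x : ℝ} (hx : |x| ≤ 1/2) :
    |x - x^2/2 + x^3/3 - Real.log (1+x)| ≤ 2*x^4 := by
  have hx1 : |(-x)| < 1 := by rw [abs_neg]; linarith [abs_nonneg x]
  have h := Real.abs_log_sub_add_sum_range_le hx1 3
  have e : (∑ i ∈ Finset.range 3, (-x)^(i+1)/(i+1)) + Real.log (1 - -x)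
      = -(x - x^2/2 + x^3/3 - Real.log (1+x)) := by
    simp [Finset.sum_range_succ]
    ring_nf
  rw [e, abs_neg, abs_neg] at h
  refine h.trans ?_
  have h1 : |x|^(3+1) = x^4 := by
    rw [show 3+1 = 4 from rfl, ← abs_pow]
    exact abs_of_nonneg (by positivity)
  rw [h1]
  rw [div_le_iff₀ (by linarith [abs_nonneg x])]
  nlinarith [abs_nonneg x, pow_nonneg (abs_nonneg x) 4, sq_nonneg x, sq_nonneg (x^2)]

lemma G_eq (p : ℝ) (hp : 0 < p) (n : ℕ) :
    (((n:ℕ)+1:ℕ):ℝ) * (binExp p (n+1) (fun c => ((c:ℝ)/(((n:ℕ)+1:ℕ):ℝ)) * Real.log ((c:ℝ)/(((n:ℕ)+1:ℕ):ℝ))) - p * Real.log p)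
      = ((n:ℝ)+1)*p * binExp p n (fun c => Real.log (((c:ℝ)+1)/(((n:ℝ)+1)*p))) := by
  have hN : ((n:ℝ)+1) ≠ 0 := by positivity
  have e1 : binExp p (n+1) (fun c => ((c:ℝ)/(((n:ℕ)+1:ℕ):ℝ)) * Real.log ((c:ℝ)/(((n:ℕ)+1:ℕ):ℝ)))
      = binExp p (n+1) (fun c => (c:ℝ) * ((1/((n:ℝ)+1)) * Real.log ((c:ℝ)/((n:ℝ)+1)))) :=
    binExp_congr fun c _ => by push_cast; ring
  rw [e1, binExp_absorb]
  have e2 : binExp p n (fun c => (1/((n:ℝ)+1)) * Real.log (((c+1:ℕ):ℝ)/((n:ℝ)+1)))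
      = (1/((n:ℝ)+1)) * binExp p n (fun c => Real.log (((c+1:ℕ):ℝ)/((n:ℝ)+1))) :=
    binExp_smul p n _ _
  rw [e2]
  have e3 : binExp p n (fun c => Real.log (((c:ℝ)+1)/(((n:ℝ)+1)*p)))
      = binExp p n (fun c => Real.log (((c+1:ℕ):ℝ)/((n:ℝ)+1)) + (-Real.log p) * 1) := by
    refine binExp_congr fun c _ => ?_
    rw [← div_div, Real.log_div (by positivity) (ne_of_gt hp)]
    push_cast; ring
  rw [e3, binExp_add, binExp_smul, binExp_one]
  push_cast
  field_simp
  ring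

lemma binExp_abs_le {p : ℝ} (hp : 0 ≤ p) (hp1 : p ≤ 1) {n : ℕ} {f g : ℕ → ℝ}
    (h : ∀ c ≤ n, |f c| ≤ g c) : |binExp p n f| ≤ binExp p n g := by
  refine (Finset.abs_sum_le_sum_abs _ _).trans (Finset.sum_le_sum fun c hc => ?_)
  have hc' : c ≤ n := by simpa [Nat.lt_succ_iff] using hc
  have hw : (0:ℝ) ≤ (n.choose c : ℝ) * p^c * (1-p)^(n-c) := by
    have : (0:ℝ) ≤ 1 - p := by linarith
    positivity
  rw [abs_mul, abs_of_nonneg hw]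
  exact mul_le_mul_of_nonneg_left (h c hc') hw

/-- Crude bound `|log y| ≤ 2√B + 2√A` when `1/A ≤ y ≤ B`-ish; stated directly. -/
lemma abs_log_le {y : ℝ} (hy : 0 < y) : |Real.log y| ≤ 2*Real.sqrt y + 2*Real.sqrt y⁻¹ := by
  have hs : 0 < Real.sqrt y := Real.sqrt_pos.2 hy
  have hs' : 0 < Real.sqrt y⁻¹ := Real.sqrt_pos.2 (by positivity)
  have h1 : Real.log y ≤ 2*Real.sqrt y := by
    have := Real.log_le_sub_one_of_pos hs
    rw [Real.log_sqrt hy.le] at this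
    linarith
  have h2 : -Real.log y ≤ 2*Real.sqrt y⁻¹ := by
    have := Real.log_le_sub_one_of_pos hs'
    rw [Real.log_sqrt (by positivity), Real.log_inv] at this
    linarith
  exact abs_le.2 ⟨by linarith, by linarith⟩

set_option maxHeartbeats 1000000 in
lemma log_decomp (p : ℝ) (hp : 0 < p) (hp1 : p ≤ 1) (n : ℕ) :
    ∃ err : ℝ,
      binExp p n (fun c => Real.log (((c:ℝ)+1)/(((n:ℝ)+1)*p)))
        = (1/(((n:ℝ)+1)*p)) * (1-p)
          - (1/(2*(((n:ℝ)+1)*p)^2)) * ((n:ℝ)*p*(1-p) + (1-p)^2)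
          + (1/(3*(((n:ℝ)+1)*p)^3)) * ((n:ℝ)*p*(1-p)*(4-5*p) + (1-p)^3)
          - err
      ∧ |err| ≤ (2 + 16*(1/p + 1/(2*p^2) + 1/(3*p^3) + 2/Real.sqrt p
            + 2*Real.sqrt (((n:ℝ)+1)*p)))
          * ((1/(((n:ℝ)+1)*p)^4) * (3*(n:ℝ)^2*p^2*(1-p)^2
            + (n:ℝ)*p*(1-p)*((1-6*p*(1-p)) + 4*(1-p)*((1-p)-p) + 6*(1-p)^2) + (1-p)^4)) := by
  set Np : ℝ := ((n:ℝ)+1)*p with hNp_def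
  clear_value Np
  have hNp : 0 < Np := by rw [hNp_def]; positivity
  set d : ℕ → ℝ := fun c => (((c:ℝ)+1)/Np - 1) - (((c:ℝ)+1)/Np - 1)^2/2
      + (((c:ℝ)+1)/Np - 1)^3/3 - Real.log (((c:ℝ)+1)/Np) with hd_def
  clear_value d
  refine ⟨binExp p n d, ?_, ?_⟩
  · have hid : binExp p n (fun c => Real.log (((c:ℝ)+1)/Np))
        = binExp p n (fun c => (1/Np) * ((c:ℝ)+1-((n:ℝ)+1)*p)
          + ((-(1/(2*Np^2))) * (((c:ℝ)+1-((n:ℝ)+1)*p)^2)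
          + ((1/(3*Np^3)) * (((c:ℝ)+1-((n:ℝ)+1)*p)^3) + (-1) * d c))) := by
      refine binExp_congr fun c _ => ?_
      simp only [hd_def]
      rw [← hNp_def]
      field_simp
      ring
    rw [hid, binExp_add, binExp_add, binExp_add, binExp_smul, binExp_smul, binExp_smul,
      binExp_smul, binExp_E1, binExp_E2, binExp_E3]
    ring
  · set R : ℝ := 1/p + 1/(2*p^2) + 1/(3*p^3) + 2/Real.sqrt p + 2*Real.sqrt Np with hR_def
    have hRnn : 0 ≤ R := by
      have h1 : 0 < Real.sqrt p := Real.sqrt_pos.2 hp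
      have h2 : 0 ≤ Real.sqrt Np := Real.sqrt_nonneg _
      rw [hR_def]; positivity
    have hbound : ∀ c ≤ n, |d c| ≤ ((2 + 16*R) * (1/Np^4)) * (((c:ℝ)+1-((n:ℝ)+1)*p)^4) := by
      intro c hc
      set y : ℝ := ((c:ℝ)+1)/Np with hy_def
      clear_value y
      set x : ℝ := y - 1 with hx_def
      clear_value x
      have hy_pos : 0 < y := by rw [hy_def]; positivity
      have hyx : 1 + x = y := by rw [hx_def]; ring
      have hy_lb : 1/Np ≤ y := by
        rw [hy_def]
        gcongr
        · linarith [Nat.cast_nonneg (α := ℝ) c]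
      have hy_ub : y ≤ 1/p := by
        rw [hy_def, hNp_def]
        rw [div_le_div_iff₀ (by positivity) hp]
        have hcn : (c:ℝ) ≤ (n:ℝ) := Nat.cast_le.2 hc
        nlinarith
      have hxNp : x = ((c:ℝ)+1-((n:ℝ)+1)*p)/Np := by
        rw [hx_def, hy_def, hNp_def]
        field_simp
      have hx4 : x^4 = (1/Np^4) * (((c:ℝ)+1-((n:ℝ)+1)*p)^4) := by
        rw [hxNp]; field_simp
      have hdx : d c = x - x^2/2 + x^3/3 - Real.log (1+x) := by
        simp only [hd_def, ← hy_def, ← hx_def]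
        rw [hyx]
      by_cases hsm : |x| ≤ 1/2
      · have h2 := log_taylor_bound hsm
        rw [← hdx] at h2
        have hx4nn : (0:ℝ) ≤ (1/Np^4) * (((c:ℝ)+1-((n:ℝ)+1)*p)^4) := by positivity
        calc |d c| ≤ 2*x^4 := h2
          _ = 2 * ((1/Np^4) * (((c:ℝ)+1-((n:ℝ)+1)*p)^4)) := by rw [hx4]
          _ ≤ (2 + 16*R) * ((1/Np^4) * (((c:ℝ)+1-((n:ℝ)+1)*p)^4)) :=
              mul_le_mul_of_nonneg_right (by linarith) hx4nn
          _ = ((2 + 16*R) * (1/Np^4)) * (((c:ℝ)+1-((n:ℝ)+1)*p)^4) := by ring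
      · push_neg at hsm
        have hxx : 1/4 ≤ x^2 := by nlinarith [sq_abs x, abs_nonneg x]
        have h16 : 1 ≤ 16 * x^4 := by nlinarith [hxx, sq_nonneg x]
        have hp1' : 1 ≤ 1/p := by
          rw [le_div_iff₀ hp]; linarith
        have hxb : |x| ≤ 1/p := by
          have hlb : -(1/p) ≤ x := by
            have : 0 < 1/Np := by positivity
            rw [hx_def]; linarith
          have hub : x ≤ 1/p := by rw [hx_def]; linarith
          exact abs_le.2 ⟨hlb, hub⟩
        have hlog : |Real.log y| ≤ 2/Real.sqrt p + 2*Real.sqrt Np := by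
          refine (abs_log_le hy_pos).trans ?_
          have hs1 : Real.sqrt y ≤ Real.sqrt (1/p) := Real.sqrt_le_sqrt hy_ub
          have hs1' : Real.sqrt (1/p) = 1/Real.sqrt p := by
            rw [one_div, one_div, Real.sqrt_inv]
          have hyinv : y⁻¹ ≤ Np := by
            have h0 : 0 < 1/Np := by positivity
            calc y⁻¹ ≤ (1/Np)⁻¹ := by
                  apply inv_anti₀ h0 hy_lb
              _ = Np := by rw [one_div, inv_inv]
          have hs2 : Real.sqrt y⁻¹ ≤ Real.sqrt Np := Real.sqrt_le_sqrt hyinv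
          rw [hs1'] at hs1
          have := Real.sqrt_nonneg p
          linarith [hs1, hs2, (by ring : 2/Real.sqrt p = 2*(1/Real.sqrt p))]
        have hx2 : x^2 ≤ (1/p)^2 := by nlinarith [sq_abs x, abs_nonneg x, hxb]
        have hx3 : |x^3| ≤ (1/p)^3 := by
          rw [abs_pow]
          exact pow_le_pow_left₀ (abs_nonneg x) hxb 3
        have hx3' := abs_le.1 hx3
        have hx1' := abs_le.1 hxb
        have hlog' := abs_le.1 hlog
        have hdR : |d c| ≤ R := by
          rw [hdx]
          have hly : Real.log (1+x) = Real.log y := by rw [hyx]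
          rw [hly]
          refine abs_le.2 ⟨?_, ?_⟩
          · rw [hR_def]
            have e1 : 1/(2*p^2) = (1/p)^2/2 := by ring
            have e2 : 1/(3*p^3) = (1/p)^3/3 := by ring
            rw [e1, e2]
            linarith [hx1'.1, hx1'.2, hx2, hx3'.1, hx3'.2, hlog'.1, hlog'.2, sq_nonneg x]
          · rw [hR_def]
            have e1 : 1/(2*p^2) = (1/p)^2/2 := by ring
            have e2 : 1/(3*p^3) = (1/p)^3/3 := by ring
            rw [e1, e2]
            linarith [hx1'.1, hx1'.2, hx2, hx3'.1, hx3'.2, hlog'.1, hlog'.2, sq_nonneg x]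
        have hx4nn : (0:ℝ) ≤ (1/Np^4) * (((c:ℝ)+1-((n:ℝ)+1)*p)^4) := by positivity
        calc |d c| ≤ R := hdR
          _ ≤ R * (16 * x^4) := le_mul_of_one_le_right hRnn h16
          _ = (16*R) * ((1/Np^4) * (((c:ℝ)+1-((n:ℝ)+1)*p)^4)) := by rw [hx4]; ring
          _ ≤ (2 + 16*R) * ((1/Np^4) * (((c:ℝ)+1-((n:ℝ)+1)*p)^4)) :=
              mul_le_mul_of_nonneg_right (by linarith) hx4nn
          _ = ((2 + 16*R) * (1/Np^4)) * (((c:ℝ)+1-((n:ℝ)+1)*p)^4) := by ring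
    have habs := binExp_abs_le hp.le hp1 hbound
    have hfin : binExp p n (fun c => ((2 + 16*R) * (1/Np^4)) * (((c:ℝ)+1-((n:ℝ)+1)*p)^4))
        = ((2 + 16*R) * (1/Np^4)) * (3*(n:ℝ)^2*p^2*(1-p)^2
          + (n:ℝ)*p*(1-p)*((1-6*p*(1-p)) + 4*(1-p)*((1-p)-p) + 6*(1-p)^2) + (1-p)^4) := by
      rw [binExp_smul, binExp_E4]
    rw [hfin] at habs
    refine habs.trans (le_of_eq ?_)
    rw [hR_def]
    ring

lemma key_tendsto (p : ℝ) (hp : 0 < p) (hp1 : p ≤ 1) :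
    Tendsto (fun N : ℕ => (N:ℝ) *
        (binExp p N (fun c => ((c:ℝ)/(N:ℝ)) * Real.log ((c:ℝ)/(N:ℝ))) - p * Real.log p))
      atTop (nhds ((1-p)/2)) := by
  have hp' : p ≠ 0 := ne_of_gt hp
  rw [← tendsto_add_atTop_iff_nat 1]
  choose err herr hberr using fun n => log_decomp p hp hp1 n
  have hu : Tendsto (fun n : ℕ => 1/((n:ℝ)+1)) atTop (nhds 0) :=
    tendsto_one_div_add_atTop_nhds_zero_nat
  -- abbreviations as plain functions
  have hfn : ∀ n : ℕ, (((n:ℕ)+1:ℕ):ℝ) * (binExp p (n+1)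
        (fun c => ((c:ℝ)/(((n:ℕ)+1:ℕ):ℝ)) * Real.log ((c:ℝ)/(((n:ℕ)+1:ℕ):ℝ))) - p * Real.log p)
      = ((1-p)/2 + ((1-p)*(4-5*p)/(3*p) - ((1-p)^2-p*(1-p))/(2*p)) * (1/((n:ℝ)+1))
          + (((1-p)^3 - p*(1-p)*(4-5*p))/(3*p^2)) * (1/((n:ℝ)+1))^2)
        - (((n:ℝ)+1)*p) * err n := by
    intro n
    rw [G_eq p hp n, herr n]
    have hn : ((n:ℝ)+1) ≠ 0 := by positivity
    field_simp
    ring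
  -- main term limit
  have hmain : Tendsto (fun n : ℕ =>
      (1-p)/2 + ((1-p)*(4-5*p)/(3*p) - ((1-p)^2-p*(1-p))/(2*p)) * (1/((n:ℝ)+1))
        + (((1-p)^3 - p*(1-p)*(4-5*p))/(3*p^2)) * (1/((n:ℝ)+1))^2)
      atTop (nhds ((1-p)/2)) := by
    have h := ((tendsto_const_nhds : Tendsto (fun _ : ℕ => (1-p)/2) atTop (nhds ((1-p)/2)))).add
      ((hu.const_mul ((1-p)*(4-5*p)/(3*p) - ((1-p)^2-p*(1-p))/(2*p))).add
        ((hu.pow 2).const_mul (((1-p)^3 - p*(1-p)*(4-5*p))/(3*p^2))))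
    simp only [mul_zero, add_zero, zero_pow, ne_eq, OfNat.ofNat_ne_zero,
      not_false_eq_true] at h
    exact Tendsto.congr (fun n => by ring) h
  -- Q function limit
  have hQ : Tendsto (fun n : ℕ => (3*p^2*(1-p)^2*(1-(1/((n:ℝ)+1)))^2
      + p*(1-p)*((1-6*p*(1-p)) + 4*(1-p)*((1-p)-p) + 6*(1-p)^2)*(1-(1/((n:ℝ)+1)))*(1/((n:ℝ)+1))
      + (1-p)^4*(1/((n:ℝ)+1))^2)/p^3) atTop
      (nhds ((3*p^2*(1-p)^2*(1-(0:ℝ))^2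
      + p*(1-p)*((1-6*p*(1-p)) + 4*(1-p)*((1-p)-p) + 6*(1-p)^2)*(1-(0:ℝ))*(0:ℝ)
      + (1-p)^4*(0:ℝ)^2)/p^3)) := by
    have hcont : Continuous (fun t : ℝ => (3*p^2*(1-p)^2*(1-t)^2
        + p*(1-p)*((1-6*p*(1-p)) + 4*(1-p)*((1-p)-p) + 6*(1-p)^2)*(1-t)*t
        + (1-p)^4*t^2)/p^3) := by fun_prop
    exact (hcont.tendsto 0).comp hu
  -- sqrt term limit
  have hsqrt : Tendsto (fun n : ℕ => Real.sqrt (p * (1/((n:ℝ)+1)))) atTop (nhds 0) := by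
    have h1 : Tendsto (fun n : ℕ => p * (1/((n:ℝ)+1))) atTop (nhds (p*0)) := hu.const_mul p
    have h2 := (Real.continuous_sqrt.tendsto (p*0)).comp h1
    simpa [Function.comp_def] using h2
  -- error term limit
  have herr0 : Tendsto (fun n : ℕ => (((n:ℝ)+1)*p) * err n) atTop (nhds 0) := by
    apply squeeze_zero_norm (a := fun n : ℕ =>
      (2 + 16*(1/p + 1/(2*p^2) + 1/(3*p^3) + 2/Real.sqrt p)) *
        ((1/((n:ℝ)+1)) * ((3*p^2*(1-p)^2*(1-(1/((n:ℝ)+1)))^2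
      + p*(1-p)*((1-6*p*(1-p)) + 4*(1-p)*((1-p)-p) + 6*(1-p)^2)*(1-(1/((n:ℝ)+1)))*(1/((n:ℝ)+1))
      + (1-p)^4*(1/((n:ℝ)+1))^2)/p^3))
      + 32*Real.sqrt (p * (1/((n:ℝ)+1))) * ((3*p^2*(1-p)^2*(1-(1/((n:ℝ)+1)))^2
      + p*(1-p)*((1-6*p*(1-p)) + 4*(1-p)*((1-p)-p) + 6*(1-p)^2)*(1-(1/((n:ℝ)+1)))*(1/((n:ℝ)+1))
      + (1-p)^4*(1/((n:ℝ)+1))^2)/p^3))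
    · intro n
      have hn : ((n:ℝ)+1) ≠ 0 := by positivity
      have hNp : (0:ℝ) < ((n:ℝ)+1)*p := by positivity
      have hb := hberr n
      have step1 : ‖(((n:ℝ)+1)*p) * err n‖ = (((n:ℝ)+1)*p) * |err n| := by
        rw [Real.norm_eq_abs, abs_mul, abs_of_pos hNp]
      rw [step1]
      have step2 : (((n:ℝ)+1)*p) * |err n| ≤ (((n:ℝ)+1)*p) *
          ((2 + 16*(1/p + 1/(2*p^2) + 1/(3*p^3) + 2/Real.sqrt p
            + 2*Real.sqrt (((n:ℝ)+1)*p)))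
          * ((1/(((n:ℝ)+1)*p)^4) * (3*(n:ℝ)^2*p^2*(1-p)^2
            + (n:ℝ)*p*(1-p)*((1-6*p*(1-p)) + 4*(1-p)*((1-p)-p) + 6*(1-p)^2) + (1-p)^4))) :=
        mul_le_mul_of_nonneg_left hb hNp.le
      refine step2.trans (le_of_eq ?_)
      -- algebraic identity, including the sqrt conversion
      have hsq : Real.sqrt (((n:ℝ)+1)*p) * (1/((n:ℝ)+1)) = Real.sqrt (p * (1/((n:ℝ)+1))) := by
        rw [show p * (1/((n:ℝ)+1)) = (((n:ℝ)+1)*p) * (1/((n:ℝ)+1))^2 by field_simp,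
          Real.sqrt_mul hNp.le, Real.sqrt_sq (by positivity)]
      rw [← hsq]
      field_simp
      ring
    · have h := ((hu.mul hQ).const_mul (2 + 16*(1/p + 1/(2*p^2) + 1/(3*p^3) + 2/Real.sqrt p))).add
        ((hsqrt.mul hQ).const_mul 32)
      simp only [zero_mul, mul_zero, add_zero, zero_add] at h
      exact Tendsto.congr (fun n => by ring) h
  have hfinal := hmain.sub herr0
  rw [sub_zero] at hfinal
  exact Tendsto.congr (fun n => (hfn n).symm) hfinal

/-- The Miller–Madow estimator `Ĥ_mm(D_N) = Ĥ_mle(D_N) + (K−1)/(2N)` has bias `o(1/N)`: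
`N · (E[Ĥ_mm(D_N)] − H(p)) → 0` as `N → ∞`. -/
theorem miller_madow_bias_little_o {K : ℕ}
    (p : Fin K → ℝ) (hp : ∀ k, 0 < p k) (hsum : ∑ k, p k = 1) :
    Tendsto
      (fun N : ℕ =>
        (N : ℝ) *
          (expect p
              (fun D : Fin N → Fin K =>
                entropy (empirical D) + ((K : ℝ) - 1) / (2 * N)) - entropy p))
      atTop (nhds 0) := by
  have hK0 : 0 < K := by
    rcases Nat.eq_zero_or_pos K with h | h
    · subst h; simp at hsum
    · exact h
  have hp1 : ∀ k, p k ≤ 1 := by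
    intro k
    calc p k ≤ ∑ j, p j := Finset.single_le_sum (fun j _ => (hp j).le) (Finset.mem_univ k)
      _ = 1 := hsum
  -- total mass of expect
  have hw : ∀ N : ℕ, (∑ D : Fin N → Fin K, ∏ n, p (D n)) = 1 := by
    intro N
    have h := expect_count p hsum ⟨0, hK0⟩ N (fun _ => 1)
    rw [binExp_one] at h
    simpa using h
  -- expectation decomposition
  have hexp : ∀ N : ℕ,
      expect p (fun D : Fin N → Fin K => entropy (empirical D) + ((K:ℝ)-1)/(2*(N:ℝ)))
        = -(∑ k, binExp (p k) N (fun c => ((c:ℝ)/(N:ℝ)) * Real.log ((c:ℝ)/(N:ℝ))))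
          + ((K:ℝ)-1)/(2*(N:ℝ)) := by
    intro N
    have h1 : expect p (fun D : Fin N → Fin K => entropy (empirical D) + ((K:ℝ)-1)/(2*(N:ℝ)))
        = (∑ D : Fin N → Fin K, (∏ n, p (D n)) * entropy (empirical D))
          + (∑ D : Fin N → Fin K, ∏ n, p (D n)) * (((K:ℝ)-1)/(2*(N:ℝ))) := by
      unfold _root_.expect
      rw [Finset.sum_mul, ← Finset.sum_add_distrib]
      exact Finset.sum_congr rfl fun D _ => by ring
    rw [h1, hw N, one_mul]
    congr 1
    have h2 : ∀ D : Fin N → Fin K, (∏ n, p (D n)) * entropy (empirical D)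
        = -(∑ k, (∏ n, p (D n)) *
            ((((Finset.univ.filter (fun n => D n = k)).card : ℝ)/(N:ℝ)) *
              Real.log ((((Finset.univ.filter (fun n => D n = k)).card : ℝ)/(N:ℝ))))) := by
      intro D
      rw [entropy]
      simp only [empirical]
      rw [mul_neg, Finset.mul_sum]
    rw [Finset.sum_congr rfl fun D _ => h2 D]
    calc (∑ D : Fin N → Fin K, -(∑ k, (∏ n, p (D n)) *
            ((((Finset.univ.filter (fun n => D n = k)).card : ℝ)/(N:ℝ)) *
              Real.log ((((Finset.univ.filter (fun n => D n = k)).card : ℝ)/(N:ℝ))))))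
        = -(∑ D : Fin N → Fin K, ∑ k, (∏ n, p (D n)) *
            ((((Finset.univ.filter (fun n => D n = k)).card : ℝ)/(N:ℝ)) *
              Real.log ((((Finset.univ.filter (fun n => D n = k)).card : ℝ)/(N:ℝ))))) := by
          rw [Finset.sum_neg_distrib]
      _ = -(∑ k, ∑ D : Fin N → Fin K, (∏ n, p (D n)) *
            ((((Finset.univ.filter (fun n => D n = k)).card : ℝ)/(N:ℝ)) *
              Real.log ((((Finset.univ.filter (fun n => D n = k)).card : ℝ)/(N:ℝ))))) := by
          rw [Finset.sum_comm]
      _ = -(∑ k, binExp (p k) N (fun c => ((c:ℝ)/(N:ℝ)) * Real.log ((c:ℝ)/(N:ℝ)))) := by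
          congr 1
          exact Finset.sum_congr rfl fun k _ =>
            expect_count p hsum k N (fun c => ((c:ℝ)/(N:ℝ)) * Real.log ((c:ℝ)/(N:ℝ)))
  -- pointwise identity for N ≥ 1
  have hFN : ∀ N : ℕ, 1 ≤ N →
      (N : ℝ) * (expect p (fun D : Fin N → Fin K =>
          entropy (empirical D) + ((K : ℝ) - 1) / (2 * N)) - entropy p)
        = (∑ k, -((N:ℝ) * (binExp (p k) N (fun c => ((c:ℝ)/(N:ℝ)) * Real.log ((c:ℝ)/(N:ℝ)))
            - p k * Real.log (p k)))) + ((K:ℝ)-1)/2 := by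
    intro N hN
    have hNne : (N:ℝ) ≠ 0 := Nat.cast_ne_zero.2 (by omega)
    rw [hexp N, entropy]
    have h3 : (∑ k, -((N:ℝ) * (binExp (p k) N (fun c => ((c:ℝ)/(N:ℝ)) * Real.log ((c:ℝ)/(N:ℝ)))
            - p k * Real.log (p k))))
        = -((N:ℝ) * ((∑ k, binExp (p k) N (fun c => ((c:ℝ)/(N:ℝ)) * Real.log ((c:ℝ)/(N:ℝ))))
            - ∑ k, p k * Real.log (p k))) := by
      rw [Finset.sum_neg_distrib, ← Finset.sum_sub_distrib, Finset.mul_sum]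
    rw [h3]
    field_simp
    ring
  -- limit of the new expression
  have hval : (∑ k : Fin K, -((1 - p k)/2)) + ((K:ℝ)-1)/2 = 0 := by
    have h2 : ∑ k : Fin K, (1 - p k) = (K:ℝ) - 1 := by
      rw [Finset.sum_sub_distrib, hsum]
      simp [Finset.card_univ]
    have h4 : ∑ k : Fin K, -((1 - p k)/2) = -((∑ k : Fin K, (1 - p k))/2) := by
      rw [Finset.sum_neg_distrib, Finset.sum_div]
    rw [h4, h2]
    ring
  have hcomb : Tendsto (fun N : ℕ =>
      (∑ k, -((N:ℝ) * (binExp (p k) N (fun c => ((c:ℝ)/(N:ℝ)) * Real.log ((c:ℝ)/(N:ℝ)))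
          - p k * Real.log (p k)))) + ((K:ℝ)-1)/2) atTop
      (nhds ((∑ k : Fin K, -((1 - p k)/2)) + ((K:ℝ)-1)/2)) := by
    exact (tendsto_finset_sum Finset.univ (fun k _ =>
      (key_tendsto (p k) (hp k) (hp1 k)).neg)).add tendsto_const_nhds
  rw [hval] at hcomb
  refine Tendsto.congr' ?_ hcomb
  filter_upwards [eventually_ge_atTop 1] with N hN
  exact (hFN N hN).symm
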